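/- Let X be a compact Hausdorff space, Y a locally convex Hausdorff topological vector space, f : X → Y a continuous map, and R : Y → Set X an upper semicontinuous multifunction with nonempty compact values such that for every finite set a₀,…,aₙ ∈ Y and every continuous g : X → Δₙ, the composite t ↦ g(R(Σᵢ tᵢ aᵢ)) : Δₙ → Set Δₙ has a fixed point. Suppose moreover f(X) is totally bounded. Then the closure of the composite multifunction y ↦ closure(f(R(y))) has a fixed point: there exists y ∈ Y with y ∈ closure{f(x) : x ∈ R(y)}. -/

import Mathlib

open Pointwise

lemma exists_convex_symm_open_nhds
    {Y : Type*} [AddCommGroup Y] [Module ℝ Y] [TopologicalSpace Y]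
    [IsTopologicalAddGroup Y] [ContinuousSMul ℝ Y] [LocallyConvexSpace ℝ Y]
    {U : Set Y} (hU : U ∈ nhds (0 : Y)) :
    ∃ W : Set Y, W ∈ nhds (0 : Y) ∧ IsOpen W ∧ Convex ℝ W ∧ (∀ z ∈ W, -z ∈ W) ∧ W ⊆ U := by
  obtain ⟨s, ⟨hs, hconv⟩, hsU⟩ := (LocallyConvexSpace.convex_basis_zero ℝ Y).mem_iff.mp hU
  refine ⟨interior s ∩ -interior s, ?_, ?_, ?_, ?_, ?_⟩
  · exact Filter.inter_mem (interior_mem_nhds.mpr hs) (by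
      simpa using neg_mem_nhds_zero Y (interior_mem_nhds.mpr hs))
  · exact isOpen_interior.inter isOpen_interior.neg
  · exact hconv.interior.inter hconv.interior.neg
  · rintro z ⟨h1, h2⟩
    exact ⟨by simpa using h2, by simpa using h1⟩
  · exact fun z hz => hsU (interior_subset hz.1)

lemma approx_fixed
    {X : Type*} [TopologicalSpace X] [CompactSpace X] [T2Space X]
    {Y : Type*} [AddCommGroup Y] [Module ℝ Y] [TopologicalSpace Y]
    [IsTopologicalAddGroup Y] [ContinuousSMul ℝ Y]
    (f : X → Y) (hf : Continuous f)
    (R : Y → Set X)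
    (hne : ∀ y, (R y).Nonempty)
    (hfix : ∀ (n : ℕ) (a : Fin (n + 1) → Y) (g : X → stdSimplex ℝ (Fin (n + 1))),
      Continuous g →
      ∃ t : stdSimplex ℝ (Fin (n + 1)),
        t ∈ g '' R (∑ i, (t : Fin (n + 1) → ℝ) i • a i))
    (htb : ∀ W ∈ nhds (0 : Y), ∃ s : Set Y, s.Finite ∧
      f '' Set.univ ⊆ ⋃ a ∈ s, {a} + W)
    (W : Set Y) (hW0 : W ∈ nhds (0 : Y)) (hWo : IsOpen W) (hWc : Convex ℝ W)
    (hWs : ∀ z ∈ W, -z ∈ W) :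
    ∃ y x, x ∈ R y ∧ y - f x ∈ W := by
  obtain ⟨s, hsfin, hscov⟩ := htb W hW0
  obtain ⟨x₀, -⟩ := hne 0
  have hfx₀ : f x₀ ∈ ⋃ a ∈ s, {a} + W := hscov ⟨x₀, trivial, rfl⟩
  have hsne : s.Nonempty := by
    rcases Set.mem_iUnion₂.mp hfx₀ with ⟨b, hb, -⟩
    exact ⟨b, hb⟩
  set l := hsfin.toFinset.toList with hl_def
  have hlpos : 0 < l.length := by
    rw [hl_def, Finset.length_toList]
    exact Finset.card_pos.mpr (by simpa using hsne)
  set n := l.length - 1 with hn_def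
  have hlen : l.length = n + 1 := by omega
  set a : Fin (n + 1) → Y := fun i => l.get (Fin.cast hlen.symm i) with ha_def
  have hmem : ∀ b ∈ s, ∃ i : Fin (n + 1), a i = b := by
    intro b hb
    have : b ∈ l := by
      rw [hl_def, Finset.mem_toList]
      simpa using hb
    obtain ⟨j, hj⟩ := List.mem_iff_get.mp this
    exact ⟨Fin.cast hlen j, by simpa [ha_def] using hj⟩
  set U : Fin (n + 1) → Set X := fun i => f ⁻¹' ({a i} + W) with hU_def
  have hUo : ∀ i, IsOpen (U i) := fun i => (hWo.add_left).preimage hf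
  have hUcov : Set.univ ⊆ ⋃ i, U i := by
    intro x _
    have : f x ∈ ⋃ b ∈ s, {b} + W := hscov ⟨x, trivial, rfl⟩
    rcases Set.mem_iUnion₂.mp this with ⟨b, hb, hxb⟩
    obtain ⟨i, hi⟩ := hmem b hb
    exact Set.mem_iUnion.mpr ⟨i, show f x ∈ {a i} + W by rw [hi]; exact hxb⟩
  obtain ⟨ρ, hρ⟩ := PartitionOfUnity.exists_isSubordinate isClosed_univ U hUo hUcov
  have hsum : ∀ x : X, ∑ i, ρ i x = 1 := by
    intro x
    rw [← finsum_eq_sum_of_fintype]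
    exact ρ.sum_eq_one (Set.mem_univ x)
  set g : X → stdSimplex ℝ (Fin (n + 1)) :=
    fun x => ⟨fun i => ρ i x, fun i => ρ.nonneg i x, hsum x⟩ with hg_def
  have hg : Continuous g :=
    Continuous.subtype_mk (continuous_pi fun i => (ρ i).continuous) _
  obtain ⟨t, x, hxR, hgx⟩ := hfix n a g hg
  have ht : ∀ i, (t : Fin (n + 1) → ℝ) i = ρ i x := by
    intro i; rw [← hgx]; rfl
  refine ⟨∑ i, (t : Fin (n + 1) → ℝ) i • a i, x, hxR, ?_⟩
  have key : (∑ i, (t : Fin (n + 1) → ℝ) i • a i) - f x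
      = ∑ i, ρ i x • (a i - f x) := by
    simp only [ht, smul_sub]
    rw [Finset.sum_sub_distrib, ← Finset.sum_smul, hsum, one_smul]
  rw [key]
  set T : Finset (Fin (n + 1)) := Finset.univ.filter fun i => ρ i x ≠ 0 with hT_def
  have hrestrict : ∑ i, ρ i x • (a i - f x) = ∑ i ∈ T, ρ i x • (a i - f x) := by
    refine (Finset.sum_filter_of_ne ?_).symm
    intro i _ h h0
    exact h (by rw [h0, zero_smul])
  have hwsum : ∑ i ∈ T, ρ i x = 1 := by
    rw [← hsum x]
    exact Finset.sum_filter_of_ne (fun i _ h => h)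
  rw [hrestrict]
  refine hWc.sum_mem (fun i _ => ρ.nonneg i x) hwsum ?_
  intro i hi
  have hne0 : ρ i x ≠ 0 := (Finset.mem_filter.mp hi).2
  have hxU : x ∈ U i := hρ i (subset_closure (by simpa using hne0))
  have hfxm : f x ∈ {a i} + W := hxU
  rw [Set.singleton_add] at hfxm
  obtain ⟨w, hw, hweq⟩ := hfxm
  have heq : a i - f x = -w := by rw [← hweq]; beta_reduce; abel
  rw [heq]
  exact hWs w hw

/-- Kakutani-type fixed point theorem specialized to locally convex spaces. -/
theorem kakutani_type_fixed_point
    {X : Type*} [TopologicalSpace X] [CompactSpace X] [T2Space X]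
    {Y : Type*} [AddCommGroup Y] [Module ℝ Y] [TopologicalSpace Y]
    [IsTopologicalAddGroup Y] [ContinuousSMul ℝ Y] [LocallyConvexSpace ℝ Y]
    [T2Space Y]
    (f : X → Y) (hf : Continuous f)
    (R : Y → Set X)
    (husc : ∀ V : Set X, IsOpen V → IsOpen {y : Y | R y ⊆ V})
    (hne : ∀ y, (R y).Nonempty)
    (hcomp : ∀ y, IsCompact (R y))
    (hfix : ∀ (n : ℕ) (a : Fin (n + 1) → Y) (g : X → stdSimplex ℝ (Fin (n + 1))),
      Continuous g →
      ∃ t : stdSimplex ℝ (Fin (n + 1)),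
        t ∈ g '' R (∑ i, (t : Fin (n + 1) → ℝ) i • a i))
    (htb : ∀ W ∈ nhds (0 : Y), ∃ s : Set Y, s.Finite ∧
      f '' Set.univ ⊆ ⋃ a ∈ s, {a} + W) :
    ∃ y : Y, y ∈ closure (f '' R y) := by
  classical
  have hKcomp : IsCompact (f '' Set.univ) := isCompact_univ.image hf
  set D : Set (Set Y) :=
    {W | W ∈ nhds (0 : Y) ∧ IsOpen W ∧ Convex ℝ W ∧ ∀ z ∈ W, -z ∈ W} with hD_def
  set A : Set Y → Set Y :=
    fun W => {z | ∃ y x, x ∈ R y ∧ y - f x ∈ W ∧ z = f x} with hA_def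
  have hAK : ∀ W, A W ⊆ f '' Set.univ := by
    rintro W z ⟨y, x, -, -, rfl⟩; exact ⟨x, trivial, rfl⟩
  have hAmono : ∀ W W' : Set Y, W ⊆ W' → A W ⊆ A W' := by
    rintro W W' hWW z ⟨y, x, h1, h2, rfl⟩
    exact ⟨y, x, h1, hWW h2, rfl⟩
  have hAne : ∀ W ∈ D, (A W).Nonempty := by
    rintro W ⟨hW0, hWo, hWc, hWs⟩
    obtain ⟨y, x, h1, h2⟩ := approx_fixed f hf R hne hfix htb W hW0 hWo hWc hWs
    exact ⟨f x, y, x, h1, h2, rfl⟩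
  have hfin : ∀ u : Finset {W : Set Y // W ∈ D},
      (f '' Set.univ ∩ ⋂ W ∈ u, closure (A W.1)).Nonempty := by
    intro u
    set W₀ : Set Y := ⋂ W ∈ u, W.1 with hW₀_def
    have hW₀D : W₀ ∈ D := by
      refine ⟨?_, ?_, ?_, ?_⟩
      · exact (Filter.biInter_finset_mem u).mpr fun W _ => W.2.1
      · exact isOpen_biInter_finset fun W _ => W.2.2.1
      · exact convex_iInter fun W => convex_iInter fun _ => W.2.2.2.1
      · intro z hz
        rw [Set.mem_iInter₂] at hz ⊢
        exact fun W hW => W.2.2.2.2 z (hz W hW)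
    obtain ⟨z, hz⟩ := hAne W₀ hW₀D
    refine ⟨z, hAK W₀ hz, ?_⟩
    rw [Set.mem_iInter₂]
    intro W hW
    exact subset_closure (hAmono W₀ W.1 (Set.biInter_subset_of_mem hW) hz)
  obtain ⟨y0, hyK, hyA⟩ := hKcomp.inter_iInter_nonempty
    (fun W : {W : Set Y // W ∈ D} => closure (A W.1)) (fun W => isClosed_closure) hfin
  have hyAll : ∀ W ∈ D, y0 ∈ closure (A W) := by
    intro W hW
    exact Set.mem_iInter.mp hyA ⟨W, hW⟩
  refine ⟨y0, ?_⟩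
  by_contra hy
  have hclosed : IsClosed (f '' R y0) := ((hcomp y0).image hf).isClosed
  have hy' : y0 ∉ f '' R y0 := fun h => hy (subset_closure h)
  have hUc : (f '' R y0)ᶜ ∈ nhds y0 := hclosed.isOpen_compl.mem_nhds hy'
  have h1 : {u : Y | y0 + u ∉ f '' R y0} ∈ nhds (0 : Y) := by
    have hc : Continuous fun u : Y => y0 + u := continuous_const.add continuous_id
    exact hc.continuousAt.preimage_mem_nhds (show (f '' R y0)ᶜ ∈ nhds (y0 + (0:Y)) by simpa using hUc)
  obtain ⟨U₁, hU₁, hU₁half⟩ := exists_nhds_zero_half h1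
  obtain ⟨W, hW0, hWo, hWc', hWs, hWU⟩ := exists_convex_symm_open_nhds hU₁
  have hsep : ∀ v ∈ W, ∀ w ∈ W, y0 + (v + w) ∉ f '' R y0 :=
    fun v hv w hw => hU₁half v (hWU hv) w (hWU hw)
  have h0W : (0 : Y) ∈ W := mem_of_mem_nhds hW0
  set V : Set X := f ⁻¹' (f '' R y0 + W) with hV_def
  have hVopen : IsOpen V := (hWo.add_left).preimage hf
  have hRV : R y0 ⊆ V := by
    intro x hx
    show f x ∈ f '' R y0 + W
    simpa using Set.add_mem_add (Set.mem_image_of_mem f hx) h0W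
  have hO : IsOpen {y : Y | R y ⊆ V} := husc V hVopen
  have h2 : {u : Y | R (y0 + u) ⊆ V} ∈ nhds (0 : Y) := by
    have hc : Continuous fun u : Y => y0 + u := continuous_const.add continuous_id
    exact hc.continuousAt.preimage_mem_nhds (show {y : Y | R y ⊆ V} ∈ nhds (y0 + (0:Y)) by simpa using hO.mem_nhds hRV)
  obtain ⟨U₃, hU₃, hU₃half⟩ := exists_nhds_zero_half h2
  obtain ⟨W₁, hW₁0, hW₁o, hW₁c, hW₁s, hW₁sub⟩ :=
    exists_convex_symm_open_nhds (Filter.inter_mem hU₃ hW0)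
  have hW₁D : W₁ ∈ D := ⟨hW₁0, hW₁o, hW₁c, hW₁s⟩
  have hnbhd : {z : Y | z - y0 ∈ W₁} ∈ nhds y0 := by
    have hc : Continuous fun z : Y => z - y0 := continuous_id.sub continuous_const
    exact hc.continuousAt.preimage_mem_nhds (show W₁ ∈ nhds (y0 - y0) by simpa using hW₁0)
  obtain ⟨z, hz1, hz2⟩ := (mem_closure_iff_nhds.mp (hyAll W₁ hW₁D)) _ hnbhd
  obtain ⟨y, x, hxRy, hyfx, rfl⟩ := hz2
  have h3 : f x - y0 ∈ W₁ := hz1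
  have h4 : R y ⊆ V := by
    have h5 := hU₃half _ ((hW₁sub h3).1) _ ((hW₁sub hyfx).1)
    simp only [Set.mem_setOf_eq] at h5
    have heq : y0 + ((f x - y0) + (y - f x)) = y := by abel
    rwa [heq] at h5
  obtain ⟨k, hk, w, hw, hkw⟩ := Set.mem_add.mp (h4 hxRy)
  have h6 : y0 + ((f x - y0) + (-w)) ∉ f '' R y0 :=
    hsep _ ((hW₁sub h3).2) _ (hWs w hw)
  exact h6 (by rw [show y0 + ((f x - y0) + (-w)) = k from by rw [← hkw]; abel]; exact hk)
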